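/- The operator H is skew-symmetric: for bounded vector fields u, w ∈ V∞, ⟨u, Hw⟩ = -⟨Hu, w⟩, where ⟨u,v⟩ = (1/2)Σ_k ∫ u_k v_k dπ. -/

import Mathlib

open MeasureTheory Filter Topology

/-- The unit vector of `ℤ^d` indexed by a coordinate and a sign. -/
def unitVec (d : ℕ) (k : Fin d × Bool) : Fin d → ℤ :=
  fun j => if j = k.1 then (if k.2 then 1 else -1) else 0

/-- Negation `k ↦ -k` on the index set `U` of unit vectors. -/
def negU {d : ℕ} (k : Fin d × Bool) : Fin d × Bool := (k.1, !k.2)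

/-- The operator `H` on vector fields: `(Hu)_k = (1/2) ∑_l h_{k,l} (∂_k + 2I) u_l`. -/
noncomputable def Hop (d : ℕ) {Ω : Type*} (τ : (Fin d → ℤ) → Ω → Ω)
    (h : (Fin d × Bool) → (Fin d × Bool) → Ω → ℝ)
    (u : (Fin d × Bool) → Ω → ℝ) (k : Fin d × Bool) (ω : Ω) : ℝ :=
  (1/2) * ∑ l : Fin d × Bool,
    h k l ω * ((u l (τ (unitVec d k) ω) - u l ω) + 2 * u l ω)

/-- `H` is skew-symmetric: for essentially bounded antisymmetric vector
fields `u, w ∈ V∞`, `⟨u, Hw⟩ = -⟨Hu, w⟩` where `⟨u,v⟩ = (1/2)∑_k ∫ u_k v_k dπ`. -/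
theorem Hop_skew_symmetric
    (d : ℕ) (Ω : Type*) [MeasurableSpace Ω] (π : Measure Ω) [IsProbabilityMeasure π]
    (τ : (Fin d → ℤ) → Ω → Ω)
    (hτ0 : τ 0 = id)
    (hτadd : ∀ z w : Fin d → ℤ, τ (z + w) = τ z ∘ τ w)
    (hmp : ∀ z, MeasurePreserving (τ z) π π)
    (h : (Fin d × Bool) → (Fin d × Bool) → Ω → ℝ)
    (hhmeas : ∀ k l, Measurable (h k l))
    (hhL2 : ∀ k l, MemLp (h k l) 2 π)
    (hA1 : ∀ k l, ∀ᵐ ω ∂π, h k l ω = - h (negU k) l (τ (unitVec d k) ω))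
    (hA2 : ∀ k l, ∀ᵐ ω ∂π, h k l ω = - h k (negU l) (τ (unitVec d l) ω))
    (hA3 : ∀ k l, ∀ᵐ ω ∂π, h k l ω = - h l k ω)
    (u w : (Fin d × Bool) → Ω → ℝ)
    (humeas : ∀ k, Measurable (u k)) (hwmeas : ∀ k, Measurable (w k))
    (hubd : ∃ C, ∀ k ω, |u k ω| ≤ C) (hwbd : ∃ C, ∀ k ω, |w k ω| ≤ C)
    (huV : ∀ k, ∀ᵐ ω ∂π, u k ω + u (negU k) (τ (unitVec d k) ω) = 0)
    (hwV : ∀ k, ∀ᵐ ω ∂π, w k ω + w (negU k) (τ (unitVec d k) ω) = 0) :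
    (1/2) * ∑ k : Fin d × Bool, ∫ ω, u k ω * Hop d τ h w k ω ∂π
      = - ((1/2) * ∑ k : Fin d × Bool, ∫ ω, Hop d τ h u k ω * w k ω ∂π) := by
  classical
  obtain ⟨Cu, hCu⟩ := hubd
  obtain ⟨Cw, hCw⟩ := hwbd
  -- group facts
  have hcancel : ∀ (z : Fin d → ℤ) ω, τ z (τ (-z) ω) = ω := by
    intro z ω
    have : τ z (τ (-z) ω) = τ (z + -z) ω := by rw [hτadd]; rfl
    rw [this, add_neg_cancel, hτ0]; rfl
  have hcancel' : ∀ (z : Fin d → ℤ) ω, τ (-z) (τ z ω) = ω := by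
    intro z ω
    have : τ (-z) (τ z ω) = τ (-z + z) ω := by rw [hτadd]; rfl
    rw [this, neg_add_cancel, hτ0]; rfl
  have hemb : ∀ z : Fin d → ℤ, MeasurableEmbedding (τ z) := fun z =>
    (MeasurableEquiv.mk ⟨τ z, τ (-z), hcancel' z, hcancel z⟩
      (hmp z).measurable (hmp (-z)).measurable).measurableEmbedding
  have hcov : ∀ (z : Fin d → ℤ) (g : Ω → ℝ), ∫ ω, g (τ z ω) ∂π = ∫ ω, g ω ∂π :=
    fun z g => (hmp z).integral_comp (hemb z) g
  have haeT : ∀ (z : Fin d → ℤ) (P : Ω → Prop), (∀ᵐ ω ∂π, P ω) → (∀ᵐ ω ∂π, P (τ z ω)) := by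
    intro z P hP
    exact ae_of_ae_map (hmp z).measurable.aemeasurable (by rwa [(hmp z).map_eq])
  -- index facts
  have hnegneg : ∀ k : Fin d × Bool, negU (negU k) = k := by intro k; simp [negU]
  have hunit_neg : ∀ k : Fin d × Bool, unitVec d (negU k) = -(unitVec d k) := by
    intro k; funext j
    simp only [unitVec, negU, Pi.neg_apply]
    rcases k with ⟨a, b⟩
    by_cases hj : j = a <;> cases b <;> simp [hj]
  have hperm : ∀ (f : (Fin d × Bool) → ℝ), (∑ k, f (negU k)) = ∑ k, f k := by
    intro f
    have hinv : Function.Involutive (negU (d := d)) := hnegneg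
    exact Fintype.sum_bijective negU hinv.bijective _ _ (fun k => rfl)
  -- a.e. facts
  have hu' : ∀ k, ∀ᵐ ω ∂π, u k (τ (-(unitVec d k)) ω) = - u (negU k) ω := by
    intro k
    filter_upwards [huV (negU k)] with ω hω
    rw [hnegneg, hunit_neg] at hω
    linarith
  have hw' : ∀ k, ∀ᵐ ω ∂π, w k (τ (-(unitVec d k)) ω) = - w (negU k) ω := by
    intro k
    filter_upwards [hwV (negU k)] with ω hω
    rw [hnegneg, hunit_neg] at hω
    linarith
  have hh1' : ∀ k l, ∀ᵐ ω ∂π, h k l (τ (-(unitVec d k)) ω) = - h (negU k) l ω := by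
    intro k l
    filter_upwards [haeT (-(unitVec d k)) _ (hA1 k l)] with ω hω
    rw [hω, hcancel]
  have hh2' : ∀ k l, ∀ᵐ ω ∂π, h k l (τ (-(unitVec d l)) ω) = - h k (negU l) ω := by
    intro k l
    filter_upwards [haeT (-(unitVec d l)) _ (hA2 k l)] with ω hω
    rw [hω, hcancel]
  -- integrability
  have hIntg : ∀ (k l : Fin d × Bool) (f : Ω → ℝ), Measurable f → (∃ C, ∀ ω, |f ω| ≤ C) →
      Integrable (fun ω => h k l ω * f ω) π := by
    intro k l f hf hbd
    have h1 : Integrable (h k l) π := (hhL2 k l).integrable one_le_two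
    have h2 := hbd.elim fun C hC => h1.bdd_mul (c := C) hf.aestronglyMeasurable
      (ae_of_all _ fun ω => by simpa [Real.norm_eq_abs] using hC ω)
    have : (fun ω => h k l ω * f ω) = fun ω => f ω * h k l ω := by funext ω; ring
    rw [this]; exact h2
  have hbd2 : ∀ (f g : Ω → ℝ) (Cf Cg : ℝ), (∀ ω, |f ω| ≤ Cf) → (∀ ω, |g ω| ≤ Cg) →
      ∀ ω, |f ω * g ω| ≤ Cf * Cg := by
    intro f g Cf Cg hf hg ω
    rw [abs_mul]
    exact mul_le_mul (hf ω) (hg ω) (abs_nonneg _) ((abs_nonneg _).trans (hf ω))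
  have hI1 : ∀ k l : Fin d × Bool,
      Integrable (fun ω => h k l ω * (u k ω * w l (τ (unitVec d k) ω))) π := fun k l =>
    hIntg k l _ ((humeas k).mul ((hwmeas l).comp (hmp _).measurable))
      ⟨Cu * Cw, hbd2 _ _ _ _ (hCu k) (fun ω => hCw l _)⟩
  have hI2 : ∀ k l : Fin d × Bool,
      Integrable (fun ω => h k l ω * (u k ω * w l ω)) π := fun k l =>
    hIntg k l _ ((humeas k).mul (hwmeas l))
      ⟨Cu * Cw, hbd2 _ _ _ _ (hCu k) (fun ω => hCw l _)⟩
  have hI3 : ∀ k l : Fin d × Bool,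
      Integrable (fun ω => h k l ω * (u l (τ (unitVec d k) ω) * w k ω)) π := fun k l =>
    hIntg k l _ (((humeas l).comp (hmp _).measurable).mul (hwmeas k))
      ⟨Cu * Cw, hbd2 _ _ _ _ (fun ω => hCu l _) (hCw k)⟩
  have hI4 : ∀ k l : Fin d × Bool,
      Integrable (fun ω => h k l ω * (u l ω * w k ω)) π := fun k l =>
    hIntg k l _ ((humeas l).mul (hwmeas k))
      ⟨Cu * Cw, hbd2 _ _ _ _ (fun ω => hCu l _) (hCw k)⟩
  have hI12 : ∀ k l : Fin d × Bool, Integrable (fun ω =>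
      h k l ω * (u k ω * w l (τ (unitVec d k) ω)) + h k l ω * (u k ω * w l ω)) π :=
    fun k l => (hI1 k l).add (hI2 k l)
  have hI34 : ∀ k l : Fin d × Bool, Integrable (fun ω =>
      h k l ω * (u l (τ (unitVec d k) ω) * w k ω) + h k l ω * (u l ω * w k ω)) π :=
    fun k l => (hI3 k l).add (hI4 k l)
  -- key per-pair identities
  have key1 : ∀ k l : Fin d × Bool,
      (∫ ω, h k l ω * (u k ω * w l (τ (unitVec d k) ω)) ∂π)
        = ∫ ω, h (negU k) l ω * (u (negU k) ω * w l ω) ∂π := by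
    intro k l
    calc (∫ ω, h k l ω * (u k ω * w l (τ (unitVec d k) ω)) ∂π)
        = ∫ ω, h k l (τ (-(unitVec d k)) ω) * (u k (τ (-(unitVec d k)) ω) *
            w l (τ (unitVec d k) (τ (-(unitVec d k)) ω))) ∂π :=
          (hcov (-(unitVec d k))
            (fun ω => h k l ω * (u k ω * w l (τ (unitVec d k) ω)))).symm
      _ = ∫ ω, h (negU k) l ω * (u (negU k) ω * w l ω) ∂π := by
          apply integral_congr_ae
          filter_upwards [hh1' k l, hu' k] with ω h1 h2
          rw [hcancel, h1, h2]; ring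
  have key2 : ∀ k l : Fin d × Bool,
      (∫ ω, h k l ω * (u k (τ (unitVec d l) ω) * w l ω) ∂π)
        = ∫ ω, h k (negU l) ω * (u k ω * w (negU l) ω) ∂π := by
    intro k l
    calc (∫ ω, h k l ω * (u k (τ (unitVec d l) ω) * w l ω) ∂π)
        = ∫ ω, h k l (τ (-(unitVec d l)) ω) * (u k (τ (unitVec d l) (τ (-(unitVec d l)) ω)) *
            w l (τ (-(unitVec d l)) ω)) ∂π :=
          (hcov (-(unitVec d l))
            (fun ω => h k l ω * (u k (τ (unitVec d l) ω) * w l ω))).symm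
      _ = ∫ ω, h k (negU l) ω * (u k ω * w (negU l) ω) ∂π := by
          apply integral_congr_ae
          filter_upwards [hh2' k l, hw' l] with ω h1 h2
          rw [hcancel, h1, h2]; ring
  have key3 : ∀ (k l : Fin d × Bool) (f : Ω → ℝ),
      (∫ ω, h k l ω * f ω ∂π) = - ∫ ω, h l k ω * f ω ∂π := by
    intro k l f
    rw [← integral_neg]
    apply integral_congr_ae
    filter_upwards [hA3 k l] with ω h1
    rw [h1]; ring
  -- expansion of the two sides
  have expandL : ∀ k : Fin d × Bool, (∫ ω, u k ω * Hop d τ h w k ω ∂π)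
      = (1/2) * ∑ l : Fin d × Bool,
          ((∫ ω, h k l ω * (u k ω * w l (τ (unitVec d k) ω)) ∂π)
            + ∫ ω, h k l ω * (u k ω * w l ω) ∂π) := by
    intro k
    have hptw : ∀ ω, u k ω * Hop d τ h w k ω
        = (1/2) * ∑ l : Fin d × Bool,
            (h k l ω * (u k ω * w l (τ (unitVec d k) ω)) + h k l ω * (u k ω * w l ω)) := by
      intro ω
      simp only [Hop]
      rw [mul_left_comm, Finset.mul_sum]
      congr 1
      exact Finset.sum_congr rfl fun l _ => by ring
    simp only [hptw]
    rw [integral_const_mul]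
    congr 1
    rw [integral_finset_sum _ (fun l _ => hI12 k l)]
    exact Finset.sum_congr rfl fun l _ => integral_add (hI1 k l) (hI2 k l)
  have expandR : ∀ k : Fin d × Bool, (∫ ω, Hop d τ h u k ω * w k ω ∂π)
      = (1/2) * ∑ l : Fin d × Bool,
          ((∫ ω, h k l ω * (u l (τ (unitVec d k) ω) * w k ω) ∂π)
            + ∫ ω, h k l ω * (u l ω * w k ω) ∂π) := by
    intro k
    have hptw : ∀ ω, Hop d τ h u k ω * w k ω
        = (1/2) * ∑ l : Fin d × Bool,
            (h k l ω * (u l (τ (unitVec d k) ω) * w k ω) + h k l ω * (u l ω * w k ω)) := by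
      intro ω
      simp only [Hop]
      rw [mul_comm, mul_left_comm, Finset.mul_sum]
      congr 1
      exact Finset.sum_congr rfl fun l _ => by ring
    simp only [hptw]
    rw [integral_const_mul]
    congr 1
    rw [integral_finset_sum _ (fun l _ => hI34 k l)]
    exact Finset.sum_congr rfl fun l _ => integral_add (hI3 k l) (hI4 k l)
  -- sums
  set SB : ℝ := ∑ k : Fin d × Bool, ∑ l : Fin d × Bool,
      ∫ ω, h k l ω * (u k ω * w l ω) ∂π with hSBdef
  have hSA : (∑ k : Fin d × Bool, ∑ l : Fin d × Bool,
      ∫ ω, h k l ω * (u k ω * w l (τ (unitVec d k) ω)) ∂π) = SB := by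
    rw [hSBdef, ← hperm (fun k => ∑ l : Fin d × Bool, ∫ ω, h k l ω * (u k ω * w l ω) ∂π)]
    exact Finset.sum_congr rfl fun k _ => Finset.sum_congr rfl fun l _ => key1 k l
  have hSB' : (∑ k : Fin d × Bool, ∑ l : Fin d × Bool,
      ∫ ω, h k l ω * (u l ω * w k ω) ∂π) = -SB := by
    have step : ∀ k l : Fin d × Bool, (∫ ω, h k l ω * (u l ω * w k ω) ∂π)
        = -(∫ ω, h l k ω * (u l ω * w k ω) ∂π) := fun k l => key3 k l _
    rw [Finset.sum_congr rfl fun k _ => Finset.sum_congr rfl fun l _ => step k l]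
    rw [Finset.sum_congr rfl
      (fun k _ => Finset.sum_neg_distrib (f := fun l => ∫ ω, h l k ω * (u l ω * w k ω) ∂π)),
      Finset.sum_neg_distrib, Finset.sum_comm, hSBdef]
  have hSA' : (∑ k : Fin d × Bool, ∑ l : Fin d × Bool,
      ∫ ω, h k l ω * (u l (τ (unitVec d k) ω) * w k ω) ∂π) = -SB := by
    have step : ∀ k l : Fin d × Bool,
        (∫ ω, h k l ω * (u l (τ (unitVec d k) ω) * w k ω) ∂π)
          = -(∫ ω, h l (negU k) ω * (u l ω * w (negU k) ω) ∂π) := by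
      intro k l
      rw [key3 k l _, key2 l k]
    rw [Finset.sum_congr rfl fun k _ => Finset.sum_congr rfl fun l _ => step k l]
    rw [Finset.sum_congr rfl
      (fun k _ => Finset.sum_neg_distrib
        (f := fun l => ∫ ω, h l (negU k) ω * (u l ω * w (negU k) ω) ∂π)),
      Finset.sum_neg_distrib]
    rw [hperm (fun k => ∑ l : Fin d × Bool, ∫ ω, h l k ω * (u l ω * w k ω) ∂π)]
    rw [Finset.sum_comm, hSBdef]
  -- final assembly
  rw [Finset.sum_congr rfl fun k _ => expandL k,
      Finset.sum_congr rfl fun k _ => expandR k]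
  simp only [Finset.sum_add_distrib, ← Finset.mul_sum]
  rw [hSA, hSA', hSB', ← hSBdef]
  ring
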